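/- Let ψᵏ, ψ : ℝⁿ → ℝ ∪ {+∞} be proper functions with epi ψ ⊆ LimInn(epi ψᵏ). Suppose εᵏ → 0, K ⊆ ℕ is an infinite index set, xᵏ is an εᵏ-minimizer of ψᵏ for each k ∈ K, xᵏ → x̄ along K, and ψᵏ(xᵏ) → ψ(x̄) along K. Then x̄ ∈ argmin ψ. -/

import Mathlib

open Filter

/-- Epigraphical nesting and approximate minimizers: if `epi ψ ⊆ LimInn (epi ψᵏ)`,
`εᵏ → 0`, `xᵏ` is an `εᵏ`-minimizer of `ψᵏ`, and along an infinite index set (encoded by a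
strictly monotone subsequence) `xᵏ → x̄` and `ψᵏ(xᵏ) → ψ(x̄)`, then `x̄ ∈ argmin ψ`. -/
theorem stmt_5 {n : ℕ}
    (ψk : ℕ → EuclideanSpace ℝ (Fin n) → EReal) (ψ : EuclideanSpace ℝ (Fin n) → EReal)
    (hproperk : ∀ k, (∀ x, ψk k x ≠ ⊥) ∧ ∃ x, ψk k x ≠ ⊤)
    (hproper : (∀ x, ψ x ≠ ⊥) ∧ ∃ x, ψ x ≠ ⊤)
    (hnest : ∀ (x : EuclideanSpace ℝ (Fin n)) (α : ℝ), ψ x ≤ (α : EReal) →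
      ∃ q : ℕ → EuclideanSpace ℝ (Fin n) × ℝ,
        (∀ᶠ k in atTop, ψk k (q k).1 ≤ ((q k).2 : EReal)) ∧
        Tendsto q atTop (nhds (x, α)))
    (εk : ℕ → ℝ) (hε0 : ∀ k, 0 ≤ εk k) (hεlim : Tendsto εk atTop (nhds 0))
    (xk : ℕ → EuclideanSpace ℝ (Fin n))
    (hmin : ∀ k y, ψk k (xk k) ≤ ψk k y + (εk k : EReal))
    (φ : ℕ → ℕ) (hφ : StrictMono φ)
    (xbar : EuclideanSpace ℝ (Fin n))
    (hxconv : Tendsto (fun i => xk (φ i)) atTop (nhds xbar))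
    (hψconv : Tendsto (fun i => ψk (φ i) (xk (φ i))) atTop (nhds (ψ xbar))) :
    ∀ y, ψ xbar ≤ ψ y := by
  intro y
  by_cases hy : ψ y = ⊤
  · rw [hy]; exact le_top
  have hyα : ψ y = (((ψ y).toReal : ℝ) : EReal) := (EReal.coe_toReal hy (hproper.1 y)).symm
  set α : ℝ := (ψ y).toReal
  obtain ⟨q, hq1, hq2⟩ := hnest y α hyα.le
  have hφt : Tendsto φ atTop atTop := hφ.tendsto_atTop
  have hq1' : ∀ᶠ i in atTop, ψk (φ i) (q (φ i)).1 ≤ ((q (φ i)).2 : EReal) := hφt.eventually hq1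
  have hRconv : Tendsto (fun i => ((q (φ i)).2 + εk (φ i) : ℝ)) atTop (nhds α) := by
    have h1 : Tendsto (fun i => (q (φ i)).2) atTop (nhds α) :=
      ((continuous_snd.tendsto _).comp hq2).comp hφt
    have h2 : Tendsto (fun i => εk (φ i)) atTop (nhds 0) := hεlim.comp hφt
    simpa using h1.add h2
  have hRconvE : Tendsto (fun i => (((q (φ i)).2 + εk (φ i) : ℝ) : EReal)) atTop
      (nhds (α : EReal)) := EReal.tendsto_coe.mpr hRconv
  have hev : ∀ᶠ i in atTop,
      ψk (φ i) (xk (φ i)) ≤ (((q (φ i)).2 + εk (φ i) : ℝ) : EReal) := by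
    filter_upwards [hq1'] with i hi
    calc ψk (φ i) (xk (φ i)) ≤ ψk (φ i) (q (φ i)).1 + (εk (φ i) : EReal) :=
          hmin (φ i) (q (φ i)).1
      _ ≤ ((q (φ i)).2 : EReal) + (εk (φ i) : EReal) := add_le_add_left hi _
      _ = (((q (φ i)).2 + εk (φ i) : ℝ) : EReal) := (EReal.coe_add _ _).symm
  have hle : ψ xbar ≤ (α : EReal) := le_of_tendsto_of_tendsto hψconv hRconvE hev
  rw [hyα]; exact hle
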